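/- Let N ≥ 2 and write N = 2r or N = 2r+1 with r an integer. An N×N skew-symmetric integer matrix B such that node 1 is a sink of B satisfies μ₁(B) = ρ B ρ⁻¹ if and only if there exist nonnegative integers m₁, …, m_r such that B = Σ_{k=1}^r m_k B_N^{(k)}. -/

import Mathlib

open Matrix

/-- The cyclic permutation matrix ρ: ρ_{i+1,i} = 1 (1-based), ρ_{1,N} = 1. -/
def rhoM (N : ℕ) : Matrix (Fin N) (Fin N) ℤ :=
  Matrix.of fun i j => if (i : ℕ) = ((j : ℕ) + 1) % N then 1 else 0

/-- The skew-rotation τ: equal to ρ except τ_{1,N} = −1. -/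
def tauM (N : ℕ) : Matrix (Fin N) (Fin N) ℤ :=
  Matrix.of fun i j =>
    if (i : ℕ) = ((j : ℕ) + 1) % N then (if (j : ℕ) + 1 = N then -1 else 1) else 0

/-- Fomin–Zelevinsky matrix mutation at node `k`. -/
def mutB {N : ℕ} (k : Fin N) (B : Matrix (Fin N) (Fin N) ℤ) : Matrix (Fin N) (Fin N) ℤ :=
  Matrix.of fun i j =>
    if i = k ∨ j = k then -B i j
    else B i j + (|B i k| * B k j + B i k * |B k j|) / 2

/-- Node `k` is a sink of `B` if all entries of column `k` are nonnegative. -/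
def IsSink {N : ℕ} (k : Fin N) (B : Matrix (Fin N) (Fin N) ℤ) : Prop :=
  ∀ i, 0 ≤ B i k


/-- The period 1 primitives: `B_N^(k) = τ^k − (τᵀ)^k`, except `B_{2r}^(r) = τ^r`. -/
def primM (N k : ℕ) : Matrix (Fin N) (Fin N) ℤ :=
  if 2 * k = N then (tauM N) ^ k else (tauM N) ^ k - ((tauM N)ᵀ) ^ k

lemma mod2 {x N : ℕ} (h : x < 2*N) : x % N = if x < N then x else x - N := by
  split
  · exact Nat.mod_eq_of_lt ‹_›
  · rw [Nat.mod_eq_sub_mod (by omega), Nat.mod_eq_of_lt (by omega)]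

lemma fin_sum_eq' {N : ℕ} (m : ℕ) (hm : m < N) (f : Fin N → ℤ) :
    (∑ l : Fin N, if (l : ℕ) = m then f l else 0) = f ⟨m, hm⟩ := by
  rw [Finset.sum_eq_single ⟨m, hm⟩]
  · simp
  · intro b _ hb
    rw [if_neg]
    intro hc
    exact hb (Fin.ext hc)
  · intro h; exact absurd (Finset.mem_univ _) h

lemma mul_rho {N : ℕ} (hN : 2 ≤ N) (M : Matrix (Fin N) (Fin N) ℤ) (i j : Fin N) :
    (M * rhoM N) i j = M i ⟨((j : ℕ) + 1) % N, Nat.mod_lt _ (by omega : 1 ≤ N)⟩ := by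
  rw [Matrix.mul_apply]
  simp only [rhoM, Matrix.of_apply, mul_ite, mul_one, mul_zero]
  exact fin_sum_eq' _ _ _

lemma rho_mul {N : ℕ} (hN : 2 ≤ N) (M : Matrix (Fin N) (Fin N) ℤ) (i j : Fin N) :
    (rhoM N * M) i j = M ⟨((i : ℕ) + N - 1) % N, Nat.mod_lt _ (by omega : 1 ≤ N)⟩ j := by
  rw [Matrix.mul_apply]
  have key : ∀ l : Fin N, ((i : ℕ) = ((l : ℕ) + 1) % N) ↔ ((l : ℕ) = ((i : ℕ) + N - 1) % N) := by
    intro l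
    rw [mod2 (show (l:ℕ)+1 < 2*N by omega), mod2 (show (i:ℕ)+N-1 < 2*N by omega)]
    constructor <;> (intro h; split at h <;> split <;> omega)
  simp only [rhoM, Matrix.of_apply, key, ite_mul, one_mul, zero_mul]
  exact fin_sum_eq' _ _ _

lemma mul_tau {N : ℕ} (hN : 2 ≤ N) (M : Matrix (Fin N) (Fin N) ℤ) (i j : Fin N) :
    (M * tauM N) i j
      = (if (j : ℕ) + 1 = N then -1 else 1) * M i ⟨((j : ℕ) + 1) % N, Nat.mod_lt _ (by omega : 1 ≤ N)⟩ := by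
  rw [Matrix.mul_apply]
  simp only [tauM, Matrix.of_apply, mul_ite, mul_one, mul_zero, mul_neg]
  rw [show (∑ l : Fin N, if (l:ℕ) = ((j:ℕ)+1) % N then (if (j:ℕ)+1 = N then -M i l else M i l) else 0)
      = (fun l => if (j:ℕ)+1 = N then -M i l else M i l) ⟨((j:ℕ)+1) % N, Nat.mod_lt _ (by omega)⟩
      from fin_sum_eq' _ _ _]
  split <;> ring

lemma tau_pow {N : ℕ} (hN : 2 ≤ N) (k : ℕ) (hk : k < N) (i j : Fin N) :
    (tauM N ^ k) i j
      = if (i : ℕ) = (j : ℕ) + k then 1 else if (i : ℕ) + N = (j : ℕ) + k then -1 else 0 := by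
  induction k generalizing j with
  | zero =>
    simp only [pow_zero, Matrix.one_apply, Fin.ext_iff, Nat.add_zero]
    split_ifs <;> omega
  | succ k ih =>
    rw [pow_succ, mul_tau hN]
    rw [ih (by omega)]
    have hval : ((⟨((j:ℕ)+1) % N, Nat.mod_lt _ (by omega)⟩ : Fin N) : ℕ) = ((j:ℕ)+1) % N := rfl
    simp only [hval]
    simp only [mod2 (show (j:ℕ)+1 < 2*N by omega)]
    split_ifs <;> omega

lemma prim_apply {N : ℕ} (hN : 2 ≤ N) (k : ℕ) (hk1 : 1 ≤ k) (hk2 : 2*k ≤ N) (i j : Fin N) :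
    primM N k i j
      = if (i : ℕ) = (j : ℕ) + k then 1 else if (i : ℕ) + N = (j : ℕ) + k then -1
        else if (j : ℕ) = (i : ℕ) + k then -1 else if (j : ℕ) + N = (i : ℕ) + k then 1 else 0 := by
  unfold primM
  split
  · rw [tau_pow hN k (by omega)]
    split_ifs <;> omega
  · rw [Matrix.sub_apply, ← Matrix.transpose_pow, Matrix.transpose_apply,
      tau_pow hN k (by omega), tau_pow hN k (by omega)]
    have h2k : 2*k ≠ N := ‹_›
    split_ifs <;> omega

set_option maxHeartbeats 2000000 in
lemma prim_shift {N : ℕ} (hN : 2 ≤ N) (k : ℕ) (hk1 : 1 ≤ k) (hk2 : 2*k ≤ N) (i j : Fin N) :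
    (if (i : ℕ) = 0 ∨ (j : ℕ) = 0 then -(primM N k i j) else primM N k i j)
      = primM N k ⟨((i : ℕ) + N - 1) % N, Nat.mod_lt _ (by omega : 1 ≤ N)⟩
          ⟨((j : ℕ) + N - 1) % N, Nat.mod_lt _ (by omega : 1 ≤ N)⟩ := by
  rw [prim_apply hN k hk1 hk2, prim_apply hN k hk1 hk2]
  have hvi : ((⟨((i:ℕ)+N-1) % N, Nat.mod_lt _ (by omega)⟩ : Fin N) : ℕ) = ((i:ℕ)+N-1) % N := rfl
  have hvj : ((⟨((j:ℕ)+N-1) % N, Nat.mod_lt _ (by omega)⟩ : Fin N) : ℕ) = ((j:ℕ)+N-1) % N := rfl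
  simp only [hvi, hvj, mod2 (show (i:ℕ)+N-1 < 2*N by omega),
    mod2 (show (j:ℕ)+N-1 < 2*N by omega)]
  split_ifs <;> omega

def predF {N : ℕ} (hN : 2 ≤ N) (i : Fin N) : Fin N :=
  ⟨((i : ℕ) + N - 1) % N, Nat.mod_lt _ (by omega : 1 ≤ N)⟩

lemma predF_val_pos {N : ℕ} (hN : 2 ≤ N) (i : Fin N) (h : 1 ≤ (i : ℕ)) :
    ((predF hN i : Fin N) : ℕ) = (i : ℕ) - 1 := by
  show ((i : ℕ) + N - 1) % N = (i : ℕ) - 1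
  have := i.isLt
  rw [mod2 (by omega)]; split <;> omega

lemma predF_val_zero {N : ℕ} (hN : 2 ≤ N) (i : Fin N) (h : (i : ℕ) = 0) :
    ((predF hN i : Fin N) : ℕ) = N - 1 := by
  show ((i : ℕ) + N - 1) % N = N - 1
  rw [mod2 (by omega)]; split <;> omega

lemma rho_mul' {N : ℕ} (hN : 2 ≤ N) (M : Matrix (Fin N) (Fin N) ℤ) (i j : Fin N) :
    (rhoM N * M) i j = M (predF hN i) j := rho_mul hN M i j

lemma succ_predF {N : ℕ} (hN : 2 ≤ N) (j : Fin N) :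
    (⟨(((predF hN j : Fin N) : ℕ) + 1) % N, Nat.mod_lt _ (by omega : 1 ≤ N)⟩ : Fin N) = j := by
  apply Fin.ext
  show ((((j : ℕ) + N - 1) % N) + 1) % N = (j : ℕ)
  have := j.isLt
  rw [mod2 (show (j:ℕ)+N-1 < 2*N by omega)]
  rw [mod2 (show (if (j:ℕ)+N-1 < N then (j:ℕ)+N-1 else (j:ℕ)+N-1-N)+1 < 2*N by split <;> omega)]
  split_ifs <;> omega

lemma predF_succ {N : ℕ} (hN : 2 ≤ N) (j : Fin N) :
    predF hN (⟨((j : ℕ) + 1) % N, Nat.mod_lt _ (by omega : 1 ≤ N)⟩ : Fin N) = j := by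
  apply Fin.ext
  show ((((j : ℕ) + 1) % N) + N - 1) % N = (j : ℕ)
  have := j.isLt
  rw [mod2 (show (j:ℕ)+1 < 2*N by omega)]
  rw [mod2 (show (if (j:ℕ)+1 < N then (j:ℕ)+1 else (j:ℕ)+1-N)+N-1 < 2*N by split <;> omega)]
  split_ifs <;> omega

lemma shift_iff {N : ℕ} (hN : 2 ≤ N) (X Y : Matrix (Fin N) (Fin N) ℤ) :
    X * rhoM N = rhoM N * Y ↔ ∀ i j, X i j = Y (predF hN i) (predF hN j) := by
  constructor
  · intro h i j
    have h2 := congrFun (congrFun h i) (predF hN j)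
    rw [mul_rho hN, rho_mul' hN, succ_predF hN j] at h2
    exact h2
  · intro h
    ext i j
    rw [mul_rho hN, rho_mul' hN,
      h i ⟨((j : ℕ) + 1) % N, Nat.mod_lt _ (by omega)⟩, predF_succ hN j]

set_option maxHeartbeats 2000000 in
lemma prim_shift' {N : ℕ} (hN : 2 ≤ N) (k : ℕ) (hk1 : 1 ≤ k) (hk2 : 2*k ≤ N) (i j : Fin N) :
    (if (i : ℕ) = 0 ∨ (j : ℕ) = 0 then -(primM N k i j) else primM N k i j)
      = primM N k (predF hN i) (predF hN j) :=
  prim_shift hN k hk1 hk2 i j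

/-- Classification of period 1 sink-type quivers: with node 1 a sink, `B` is period 1
iff it is a nonnegative integer combination of the period 1 primitives. -/
theorem stmt1 (N : ℕ) (hN : 2 ≤ N) (B : Matrix (Fin N) (Fin N) ℤ)
    (hskew : Bᵀ = -B) (hsink : IsSink ⟨0, by omega⟩ B) :
    mutB ⟨0, by omega⟩ B = rhoM N * B * (rhoM N)⁻¹ ↔
      ∃ m : ℕ → ℕ, B = ∑ k ∈ Finset.Icc 1 (N / 2), (m k : ℤ) • primM N k := by
  set_option maxHeartbeats 1000000 in
  have hz : (0 : ℕ) < N := by omega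
  have hs : ∀ i j, B j i = -B i j := by
    intro i j
    have h := congrFun (congrFun hskew i) j
    simpa [Matrix.transpose_apply, Matrix.neg_apply] using h
  have hmut : ∀ i j : Fin N, mutB ⟨0, hz⟩ B i j
      = if (i : ℕ) = 0 ∨ (j : ℕ) = 0 then -B i j else B i j := by
    intro i j
    show (if i = ⟨0,hz⟩ ∨ j = ⟨0,hz⟩ then -B i j
      else B i j + (|B i ⟨0,hz⟩| * B ⟨0,hz⟩ j + B i ⟨0,hz⟩ * |B ⟨0,hz⟩ j|) / 2) = _
    by_cases hc : (i : ℕ) = 0 ∨ (j : ℕ) = 0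
    · rw [if_pos hc, if_pos]
      rcases hc with hc | hc
      · exact Or.inl (Fin.ext hc)
      · exact Or.inr (Fin.ext hc)
    · push_neg at hc
      rw [if_neg, if_neg (by push_neg; exact hc)]
      · have h1 : 0 ≤ B i ⟨0,hz⟩ := hsink i
        have h3 : 0 ≤ B j ⟨0,hz⟩ := hsink j
        have h2 : B ⟨0,hz⟩ j = -B j ⟨0,hz⟩ := hs j ⟨0,hz⟩
        have h4 : |B i ⟨0,hz⟩| * B ⟨0,hz⟩ j + B i ⟨0,hz⟩ * |B ⟨0,hz⟩ j| = 0 := by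
          rw [h2, abs_of_nonneg h1, abs_neg, abs_of_nonneg h3]; ring
        rw [h4]
        norm_num
      · rintro (h | h)
        · exact hc.1 (congrArg Fin.val h)
        · exact hc.2 (congrArg Fin.val h)
  have hrr : rhoM N * (rhoM N)ᵀ = 1 := by
    ext i j
    rw [rho_mul' hN, Matrix.transpose_apply, Matrix.one_apply]
    show (if (j:ℕ) = (((predF hN i : Fin N):ℕ) + 1) % N then (1:ℤ) else 0) = _
    have hv : (((predF hN i : Fin N):ℕ) + 1) % N = (i:ℕ) := congrArg Fin.val (succ_predF hN i)
    rw [hv]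
    by_cases hc : i = j
    · rw [if_pos hc, if_pos (congrArg Fin.val hc).symm]
    · rw [if_neg hc, if_neg (fun h => hc (Fin.ext h.symm))]
  have hrl : (rhoM N)ᵀ * rhoM N = 1 := by
    ext i j
    rw [mul_rho hN, Matrix.transpose_apply, Matrix.one_apply]
    show (if ((((j:ℕ)+1) % N : ℕ)) = ((i:ℕ)+1) % N then (1:ℤ) else 0) = _
    have hiff : ((((j:ℕ)+1) % N : ℕ) = ((i:ℕ)+1) % N) ↔ i = j := by
      rw [mod2 (show (j:ℕ)+1 < 2*N by omega), mod2 (show (i:ℕ)+1 < 2*N by omega), Fin.ext_iff]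
      have := i.isLt; have := j.isLt
      split_ifs <;> omega
    simp only [hiff]
  have hinv : (rhoM N)⁻¹ = (rhoM N)ᵀ := Matrix.inv_eq_right_inv hrr
  have step1 : (mutB ⟨0, hz⟩ B = rhoM N * B * (rhoM N)⁻¹)
      ↔ (mutB ⟨0, hz⟩ B * rhoM N = rhoM N * B) := by
    rw [hinv]
    constructor
    · intro h
      rw [h, Matrix.mul_assoc (rhoM N * B), hrl, Matrix.mul_one]
    · intro h
      rw [← h, Matrix.mul_assoc, hrr, Matrix.mul_one]
  refine Iff.trans step1 (Iff.trans (shift_iff hN _ B) ?_)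
  constructor
  · -- forward direction
    intro hP
    simp only [hmut] at hP
    -- translation invariance
    have trans : ∀ (n : ℕ) (i j : Fin N), (j:ℕ) = n → ∀ (d : ℕ) (hdn : d < N),
        (j:ℕ) + d = (i:ℕ) → B i j = B ⟨d, hdn⟩ ⟨0, hz⟩ := by
      intro n
      induction n with
      | zero =>
        intro i j hj d hdn hd
        have hjz : j = ⟨0, hz⟩ := Fin.ext hj
        have hid : i = ⟨d, hdn⟩ := Fin.ext (show (i:ℕ) = d by omega)
        rw [hjz, hid]
      | succ n ih =>
        intro i j hj d hdn hd
        have hi1 : 1 ≤ (i:ℕ) := by omega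
        have hj1 : 1 ≤ (j:ℕ) := by omega
        have hstep := hP i j
        rw [if_neg (by omega)] at hstep
        rw [hstep]
        have h1 := predF_val_pos hN i hi1
        have h2 := predF_val_pos hN j hj1
        exact ih (predF hN i) (predF hN j) (by omega) d hdn (by omega)
    have transl : ∀ (i j : Fin N) (d : ℕ) (hdn : d < N),
        (j:ℕ) + d = (i:ℕ) → B i j = B ⟨d, hdn⟩ ⟨0, hz⟩ :=
      fun i j d hdn hd => trans (j:ℕ) i j rfl d hdn hd
    have sym : ∀ (d : ℕ) (h1 : 1 ≤ d) (h2 : d < N) (h3 : N - d < N),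
        B ⟨d, h2⟩ ⟨0, hz⟩ = B ⟨N-d, h3⟩ ⟨0, hz⟩ := by
      intro d h1 h2 h3
      have hh := hP ⟨0,hz⟩ ⟨d,h2⟩
      rw [if_pos (Or.inl rfl)] at hh
      have e1 : B ⟨d,h2⟩ ⟨0,hz⟩ = -B ⟨0,hz⟩ ⟨d,h2⟩ := hs ⟨0,hz⟩ ⟨d,h2⟩
      have e2 : ((predF hN (⟨0,hz⟩ : Fin N)):ℕ) = N-1 := predF_val_zero hN _ rfl
      have e3 : ((predF hN (⟨d,h2⟩ : Fin N)):ℕ) = d-1 := predF_val_pos hN _ h1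
      have e4 := transl (predF hN ⟨0,hz⟩) (predF hN ⟨d,h2⟩) (N-d) h3 (by omega)
      rw [e1, hh]
      exact e4
    refine ⟨fun k => (B ⟨k % N, Nat.mod_lt _ hz⟩ ⟨0, hz⟩).toNat, ?_⟩
    have hcast : ∀ (d : ℕ) (hd : d < N),
        ((B ⟨d % N, Nat.mod_lt _ hz⟩ ⟨0, hz⟩).toNat : ℤ) = B ⟨d, hd⟩ ⟨0, hz⟩ := by
      intro d hd
      have hmod : (⟨d % N, Nat.mod_lt _ hz⟩ : Fin N) = ⟨d, hd⟩ := Fin.ext (Nat.mod_eq_of_lt hd)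
      rw [hmod]
      exact Int.toNat_of_nonneg (hsink _)
    ext i j
    rw [Matrix.sum_apply]
    simp only [Matrix.smul_apply, smul_eq_mul]
    rcases lt_trichotomy ((j:ℕ)) ((i:ℕ)) with hlt | heq | hgt
    · -- i > j
      have hdn : (i:ℕ) - (j:ℕ) < N := by have := i.isLt; omega
      have hBij := transl i j ((i:ℕ)-(j:ℕ)) hdn (by omega)
      rcases le_or_gt ((i:ℕ)-(j:ℕ)) (N/2) with hle | hgt2
      · have hsum : (∑ k ∈ Finset.Icc 1 (N/2),
            ((B ⟨k % N, Nat.mod_lt _ hz⟩ ⟨0, hz⟩).toNat : ℤ) * primM N k i j)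
            = ((B ⟨((i:ℕ)-(j:ℕ)) % N, Nat.mod_lt _ hz⟩ ⟨0, hz⟩).toNat : ℤ)
              * primM N ((i:ℕ)-(j:ℕ)) i j := by
          refine Finset.sum_eq_single _ (fun k hk hne => ?_) (fun hd => absurd
            (Finset.mem_Icc.mpr ⟨by omega, hle⟩) hd)
          rw [Finset.mem_Icc] at hk
          have hzero : primM N k i j = 0 := by
            rw [prim_apply hN k (by omega) (by omega)]
            split_ifs <;> omega
          rw [hzero, mul_zero]
        have hprim : primM N ((i:ℕ)-(j:ℕ)) i j = 1 := by
          rw [prim_apply hN _ (by omega) (by omega)]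
          split_ifs <;> omega
        rw [hsum, hprim, hcast _ hdn, mul_one]
        exact hBij
      · have hdn2 : N - ((i:ℕ)-(j:ℕ)) < N := by omega
        have hsum : (∑ k ∈ Finset.Icc 1 (N/2),
            ((B ⟨k % N, Nat.mod_lt _ hz⟩ ⟨0, hz⟩).toNat : ℤ) * primM N k i j)
            = ((B ⟨(N-((i:ℕ)-(j:ℕ))) % N, Nat.mod_lt _ hz⟩ ⟨0, hz⟩).toNat : ℤ)
              * primM N (N-((i:ℕ)-(j:ℕ))) i j := by
          refine Finset.sum_eq_single _ (fun k hk hne => ?_) (fun hd => absurd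
            (Finset.mem_Icc.mpr ⟨by omega, by omega⟩) hd)
          rw [Finset.mem_Icc] at hk
          have hzero : primM N k i j = 0 := by
            rw [prim_apply hN k (by omega) (by omega)]
            split_ifs <;> omega
          rw [hzero, mul_zero]
        have hprim : primM N (N-((i:ℕ)-(j:ℕ))) i j = 1 := by
          rw [prim_apply hN _ (by omega) (by omega)]
          split_ifs <;> omega
        rw [hsum, hprim, hcast _ hdn2, mul_one, hBij,
          sym ((i:ℕ)-(j:ℕ)) (by omega) hdn hdn2]
    · -- diagonal
      have hij : j = i := Fin.ext heq
      rw [hij]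
      have h00 : B i i = 0 := by have := hs i i; omega
      rw [h00]
      symm
      refine Finset.sum_eq_zero (fun k hk => ?_)
      rw [Finset.mem_Icc] at hk
      have hzero : primM N k i i = 0 := by
        rw [prim_apply hN k (by omega) (by omega)]
        split_ifs <;> omega
      rw [hzero, mul_zero]
    · -- i < j
      have hdn : (j:ℕ) - (i:ℕ) < N := by have := j.isLt; omega
      have hBji := transl j i ((j:ℕ)-(i:ℕ)) hdn (by omega)
      have hBij : B i j = -B ⟨(j:ℕ)-(i:ℕ), hdn⟩ ⟨0, hz⟩ := by
        have h5 := hs i j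
        omega
      rcases le_or_gt ((j:ℕ)-(i:ℕ)) (N/2) with hle | hgt2
      · have hsum : (∑ k ∈ Finset.Icc 1 (N/2),
            ((B ⟨k % N, Nat.mod_lt _ hz⟩ ⟨0, hz⟩).toNat : ℤ) * primM N k i j)
            = ((B ⟨((j:ℕ)-(i:ℕ)) % N, Nat.mod_lt _ hz⟩ ⟨0, hz⟩).toNat : ℤ)
              * primM N ((j:ℕ)-(i:ℕ)) i j := by
          refine Finset.sum_eq_single _ (fun k hk hne => ?_) (fun hd => absurd
            (Finset.mem_Icc.mpr ⟨by omega, hle⟩) hd)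
          rw [Finset.mem_Icc] at hk
          have hzero : primM N k i j = 0 := by
            rw [prim_apply hN k (by omega) (by omega)]
            split_ifs <;> omega
          rw [hzero, mul_zero]
        have hprim : primM N ((j:ℕ)-(i:ℕ)) i j = -1 := by
          rw [prim_apply hN _ (by omega) (by omega)]
          split_ifs <;> omega
        rw [hsum, hprim, hcast _ hdn, mul_neg_one, hBij]
      · have hdn2 : N - ((j:ℕ)-(i:ℕ)) < N := by omega
        have hsum : (∑ k ∈ Finset.Icc 1 (N/2),
            ((B ⟨k % N, Nat.mod_lt _ hz⟩ ⟨0, hz⟩).toNat : ℤ) * primM N k i j)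
            = ((B ⟨(N-((j:ℕ)-(i:ℕ))) % N, Nat.mod_lt _ hz⟩ ⟨0, hz⟩).toNat : ℤ)
              * primM N (N-((j:ℕ)-(i:ℕ))) i j := by
          refine Finset.sum_eq_single _ (fun k hk hne => ?_) (fun hd => absurd
            (Finset.mem_Icc.mpr ⟨by omega, by omega⟩) hd)
          rw [Finset.mem_Icc] at hk
          have hzero : primM N k i j = 0 := by
            rw [prim_apply hN k (by omega) (by omega)]
            split_ifs <;> omega
          rw [hzero, mul_zero]
        have hprim : primM N (N-((j:ℕ)-(i:ℕ))) i j = -1 := by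
          rw [prim_apply hN _ (by omega) (by omega)]
          split_ifs <;> omega
        rw [hsum, hprim, hcast _ hdn2, mul_neg_one, hBij,
          sym ((j:ℕ)-(i:ℕ)) (by omega) hdn hdn2]
  · -- backward direction
    rintro ⟨m, hBeq⟩ i j
    rw [hmut i j, hBeq]
    simp only [Matrix.sum_apply, Matrix.smul_apply, smul_eq_mul]
    rw [← Finset.sum_neg_distrib]
    split_ifs with hc
    · refine Finset.sum_congr rfl (fun k hk => ?_)
      rw [Finset.mem_Icc] at hk
      have hsh := prim_shift' hN k (by omega) (by omega) i j
      rw [if_pos hc] at hsh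
      rw [← hsh]
      ring
    · refine Finset.sum_congr rfl (fun k hk => ?_)
      rw [Finset.mem_Icc] at hk
      have hsh := prim_shift' hN k (by omega) (by omega) i j
      rw [if_neg hc] at hsh
      rw [← hsh]
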